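/- Let f : ℝᵈ → ℝ be continuously differentiable and let a ∈ ℝᵈ be a point with ∇f(a) ≠ 0. Define Ω := {x ∈ ℝᵈ : f(x) ≤ f(a)}, Ω₀ := {a} ∪ {x ∈ ℝᵈ : f(x) < f(a)}, and the half-space K := {x ∈ ℝᵈ : ⟨∇f(a), x − a⟩ ≤ 0}. Then K is a tent of Ω at a and K is a tent of Ω₀ at a. -/

import Mathlib

open scoped RealInnerProductSpace
open Asymptotics Topology

noncomputable section

abbrev Euc (d : ℕ) : Type := EuclideanSpace ℝ (Fin d)

/-- `K` is a convex cone with vertex `a`. -/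
def IsConvexCone {E : Type*} [NormedAddCommGroup E] [InnerProductSpace ℝ E]
    (a : E) (K : Set E) : Prop :=
  a ∈ K ∧ (∀ x ∈ K, ∀ α : ℝ, 0 ≤ α → a + α • (x - a) ∈ K) ∧ Convex ℝ K

/-- The polar (dual) cone of a cone `K` with vertex `a`. -/
def polarCone {E : Type*} [NormedAddCommGroup E] [InnerProductSpace ℝ E]
    (a : E) (K : Set E) : Set E :=
  {y | ∀ x ∈ K, ⟪y, x - a⟫ ≤ 0}

/-- `Q` is a tent of `Ω` at `a`. -/
def IsTent {E : Type*} [NormedAddCommGroup E] [InnerProductSpace ℝ E]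
    (Ω : Set E) (a : E) (Q : Set E) : Prop :=
  IsConvexCone a Q ∧
  ∃ ψ : E → E, (fun x => ψ x - x) =o[𝓝 a] (fun x => x - a) ∧
    ∃ ε : ℝ, 0 < ε ∧ ∀ x ∈ Q, ‖x - a‖ < ε → ψ x ∈ Ω

/-- `Q` is a local tent of `Ω` at `a`. -/
def IsLocalTent {E : Type*} [NormedAddCommGroup E] [InnerProductSpace ℝ E]
    (Ω : Set E) (a : E) (Q : Set E) : Prop :=
  IsConvexCone a Q ∧
  ∀ x ∈ intrinsicInterior ℝ Q, ∃ Q' : Set E, Q' ⊆ Q ∧ IsTent Ω a Q' ∧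
    x ∈ intrinsicInterior ℝ Q' ∧ affineSpan ℝ Q' = affineSpan ℝ Q

/-- A family of convex cones with common vertex `a` is separable. -/
def SeparableFam {E : Type*} [NormedAddCommGroup E] [InnerProductSpace ℝ E]
    {ι : Type*} (a : E) (K : ι → Set E) : Prop :=
  ∃ (i : ι) (c : E), c ≠ 0 ∧ (∀ x ∈ K i, ⟪c, x - a⟫ ≤ 0) ∧
    ∀ x : E, (∀ j, j ≠ i → x ∈ K j) → 0 ≤ ⟪c, x - a⟫

set_option maxHeartbeats 1000000

/-- The half-space determined by the gradient of `f` at a non-critical point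
`a` is a tent at `a` of the sublevel set `{f ≤ f a}` and of the set
`{a} ∪ {f < f a}`. -/
theorem stmt14 (d : ℕ) (f : Euc d → ℝ) (hf : ContDiff ℝ 1 f) (a : Euc d)
    (hgrad : gradient f a ≠ 0) :
    IsTent {x | f x ≤ f a} a {x | ⟪gradient f a, x - a⟫ ≤ 0} ∧
    IsTent (insert a {x | f x < f a}) a {x | ⟪gradient f a, x - a⟫ ≤ 0} := by
  set g := gradient f a with hg
  have hgn : (0:ℝ) < ‖g‖ := norm_pos_iff.mpr hgrad
  have hg2 : (0:ℝ) < ‖g‖^2 := by positivity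
  have hdiff : Differentiable ℝ f := hf.differentiable one_ne_zero
  have hfd : ∀ y v, fderiv ℝ f y v = ⟪gradient f y, v⟫ := by
    intro y v
    rw [((hdiff y).hasGradientAt.hasFDerivAt).fderiv]
    exact (InnerProductSpace.toDual_apply_apply)
  have hcontf : Continuous fun y => fderiv ℝ f y g :=
    (ContinuousLinearMap.apply ℝ ℝ g).continuous.comp (hf.continuous_fderiv one_ne_zero)
  -- the cone
  have hcone : IsConvexCone a {x : Euc d | ⟪g, x - a⟫ ≤ 0} := by
    refine ⟨?_, ?_, ?_⟩
    · show ⟪g, a - a⟫ ≤ 0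
      rw [sub_self, inner_zero_right]
    · intro x hx α hα
      show ⟪g, a + α • (x - a) - a⟫ ≤ 0
      rw [add_sub_cancel_left, real_inner_smul_right]
      exact mul_nonpos_of_nonneg_of_nonpos hα hx
    · intro x hx y hy α β hα hβ hαβ
      show ⟪g, α • x + β • y - a⟫ ≤ 0
      have heq : α • (x - a) + β • (y - a) = α • x + β • y - (α + β) • a := by
        module
      rw [hαβ, one_smul] at heq
      rw [← heq, inner_add_right, real_inner_smul_right, real_inner_smul_right]
      have := mul_nonpos_of_nonneg_of_nonpos hα hx
      have := mul_nonpos_of_nonneg_of_nonpos hβ hy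
      linarith
  -- ball where the directional derivative along g is large
  have hopen : IsOpen {y : Euc d | ‖g‖^2/2 < fderiv ℝ f y g} := isOpen_lt continuous_const hcontf
  have hamem : a ∈ {y : Euc d | ‖g‖^2/2 < fderiv ℝ f y g} := by
    simp only [Set.mem_setOf_eq, hfd a g, ← hg, real_inner_self_eq_norm_sq]
    linarith
  obtain ⟨ρ, hρ, hball⟩ := Metric.isOpen_iff.mp hopen a hamem
  -- key decrease estimate
  have key : ∀ x : Euc d, ‖x - a‖ < ρ/2 → ∀ s : ℝ, 0 ≤ s → s * ‖g‖ < ρ/2 →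
      f (x - s • g) ≤ f x - s * (‖g‖^2/2) := by
    intro x hx s hs hsg
    set h : ℝ → ℝ := fun t => f (x - t • g) + t * (‖g‖^2/2) with hh
    have hmem : ∀ t ∈ Set.Icc (0:ℝ) s, x - t • g ∈ Metric.ball a ρ := by
      intro t ht
      rw [Metric.mem_ball, dist_eq_norm]
      have h1 : ‖x - t • g - a‖ ≤ ‖x - a‖ + t * ‖g‖ := by
        calc ‖x - t • g - a‖ = ‖(x - a) + (-(t • g))‖ := by congr 1; abel
          _ ≤ ‖x - a‖ + ‖-(t • g)‖ := norm_add_le _ _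
          _ = ‖x - a‖ + t * ‖g‖ := by
              rw [norm_neg, norm_smul, Real.norm_eq_abs, abs_of_nonneg ht.1]
      have h2 : t * ‖g‖ ≤ s * ‖g‖ := mul_le_mul_of_nonneg_right ht.2 (le_of_lt hgn)
      linarith
    have hderiv : ∀ t : ℝ, HasDerivAt h (fderiv ℝ f (x - t • g) (-g) + ‖g‖^2/2) t := by
      intro t
      have h1 : HasDerivAt (fun t : ℝ => x - t • g) (-g) t := by
        have := ((hasDerivAt_id t).smul_const g).const_sub x
        simpa using this
      have h2 : HasDerivAt (fun t : ℝ => f (x - t • g)) (fderiv ℝ f (x - t • g) (-g)) t :=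
        (hdiff (x - t • g)).hasFDerivAt.comp_hasDerivAt t h1
      have h3 : HasDerivAt (fun t : ℝ => t * (‖g‖^2/2)) (‖g‖^2/2) t := by
        simpa using (hasDerivAt_mul_const (‖g‖^2/2) (x := t))
      exact h2.add h3
    have hanti : AntitoneOn h (Set.Icc 0 s) := by
      apply antitoneOn_of_deriv_nonpos (convex_Icc 0 s)
      · have hc1 : Continuous fun t : ℝ => x - t • g :=
          continuous_const.sub (continuous_id.smul continuous_const)
        exact ((hdiff.continuous.comp hc1).add (continuous_id.mul continuous_const)).continuousOn
      · intro t _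
        exact ((hderiv t).differentiableAt).differentiableWithinAt
      · intro t ht
        rw [interior_Icc] at ht
        rw [(hderiv t).deriv]
        have hm : x - t • g ∈ Metric.ball a ρ := hmem t ⟨le_of_lt ht.1, le_of_lt ht.2⟩
        have hgt := hball hm
        simp only [Set.mem_setOf_eq] at hgt
        have hneg : fderiv ℝ f (x - t • g) (-g) = -(fderiv ℝ f (x - t • g) g) := by
          rw [map_neg]
        rw [hneg]; linarith
    have := hanti ⟨le_refl 0, hs⟩ ⟨hs, le_refl s⟩ hs
    simp only [hh, zero_smul, sub_zero, zero_mul, add_zero] at this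
    linarith
  -- Taylor remainder
  set r : Euc d → ℝ := fun x => f x - f a - ⟪g, x - a⟫ with hr
  have hro : r =o[𝓝 a] fun x => x - a := by
    have := (hdiff a).hasGradientAt
    rw [hasGradientAt_iff_isLittleO] at this
    exact this
  set c : Euc d → ℝ :=
    fun x => (2/‖g‖^2) * (max 0 (r x) + ‖x - a‖^2) with hc
  set ψ : Euc d → Euc d := fun x => x - c x • g with hψ
  have hcnonneg : ∀ x, 0 ≤ c x := by
    intro x
    apply mul_nonneg (by positivity)
    exact add_nonneg (le_max_left _ _) (by positivity)
  have hmaxo : (fun x => max 0 (r x)) =o[𝓝 a] fun x => x - a := by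
    refine IsBigO.trans_isLittleO ?_ hro
    apply isBigO_of_le
    intro x
    rw [Real.norm_eq_abs, Real.norm_eq_abs]
    rcases le_or_gt (r x) 0 with h | h
    · rw [max_eq_left h, abs_zero]; exact abs_nonneg _
    · rw [max_eq_right (le_of_lt h)]
  have hsqo : (fun x : Euc d => ‖x - a‖^2) =o[𝓝 a] fun x => x - a := by
    rw [isLittleO_iff]
    intro ε hε
    filter_upwards [Metric.ball_mem_nhds a hε] with x hx
    rw [Metric.mem_ball, dist_eq_norm] at hx
    rw [Real.norm_eq_abs, abs_of_nonneg (by positivity), sq]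
    exact mul_le_mul_of_nonneg_right (le_of_lt hx) (norm_nonneg _)
  have hco : c =o[𝓝 a] fun x => x - a := by
    have := (hmaxo.add hsqo).const_mul_left (2/‖g‖^2)
    exact this
  have hψo : (fun x => ψ x - x) =o[𝓝 a] fun x => x - a := by
    have heq : (fun x => ψ x - x) = fun x => (-(c x)) • g := by
      funext x
      rw [hψ, neg_smul, sub_eq_iff_eq_add]
      abel
    rw [heq, isLittleO_iff]
    intro ε hε
    have hεg : 0 < ε / ‖g‖ := div_pos hε hgn
    filter_upwards [hco.def hεg] with x hx
    rw [norm_smul, norm_neg, Real.norm_eq_abs]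
    calc |c x| * ‖g‖ ≤ (ε / ‖g‖ * ‖x - a‖) * ‖g‖ := by
          apply mul_le_mul_of_nonneg_right _ (norm_nonneg g)
          simpa using hx
      _ = ε * ‖x - a‖ := by field_simp
  -- choice of ε
  obtain ⟨ε₀, hε₀, hcb⟩ := Metric.eventually_nhds_iff.mp (hco.def one_pos)
  set ε : ℝ := min ε₀ (min (ρ/2) (ρ/(2*(‖g‖+1)))) with hε
  have hεpos : 0 < ε := by
    apply lt_min hε₀
    exact lt_min (by linarith) (div_pos hρ (by positivity))
  -- main estimate
  have main : ∀ x : Euc d, ⟪g, x - a⟫ ≤ 0 → ‖x - a‖ < ε →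
      f (ψ x) ≤ f a + ⟪g, x - a⟫ - ‖x - a‖^2 := by
    intro x hxK hxε
    have hxa : ‖x - a‖ < ε₀ := lt_of_lt_of_le hxε (min_le_left _ _)
    have hcx : |c x| ≤ ‖x - a‖ := by
      have h := hcb (show dist x a < ε₀ by rwa [dist_eq_norm])
      rw [Real.norm_eq_abs, one_mul] at h
      exact h
    have hcx' : c x ≤ ‖x - a‖ := le_trans (le_abs_self _) hcx
    have hx2 : ‖x - a‖ < ρ/2 := lt_of_lt_of_le hxε (le_trans (min_le_right _ _) (min_le_left _ _))
    have hx3 : ‖x - a‖ < ρ/(2*(‖g‖+1)) :=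
      lt_of_lt_of_le hxε (le_trans (min_le_right _ _) (min_le_right _ _))
    have hsg : c x * ‖g‖ < ρ/2 := by
      have h1 : c x * ‖g‖ ≤ ‖x - a‖ * ‖g‖ := mul_le_mul_of_nonneg_right hcx' (le_of_lt hgn)
      have h2 : ‖x - a‖ * ‖g‖ < (ρ/(2*(‖g‖+1))) * (‖g‖+1) :=
        mul_lt_mul' (le_of_lt hx3) (by linarith) (le_of_lt hgn) (by positivity)
      have h3 : (ρ/(2*(‖g‖+1))) * (‖g‖+1) = ρ/2 := by
        field_simp
      linarith
    have hdec : f (ψ x) ≤ f x - c x * (‖g‖^2/2) := key x hx2 (c x) (hcnonneg x) hsg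
    have hcval : c x * (‖g‖^2/2) = max 0 (r x) + ‖x - a‖^2 := by
      rw [hc]
      have : ‖g‖^2 ≠ 0 := by positivity
      field_simp
    rw [hcval] at hdec
    have hrle : r x ≤ max 0 (r x) := le_max_right _ _
    have hfx : f x = f a + ⟪g, x - a⟫ + r x := by rw [hr]; ring
    linarith
  -- ψ fixes a
  have hra : r a = 0 := by
    rw [hr]
    show f a - f a - ⟪g, a - a⟫ = 0
    rw [sub_self a, inner_zero_right]
    ring
  have hψa : ψ a = a := by
    rw [hψ]
    show a - c a • g = a
    have hca : c a = 0 := by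
      rw [hc]
      show (2/‖g‖^2) * (max 0 (r a) + ‖a - a‖^2) = 0
      rw [hra, sub_self, norm_zero, max_self]
      ring
    rw [hca, zero_smul, sub_zero]
  constructor
  · refine ⟨hcone, ψ, hψo, ε, hεpos, ?_⟩
    intro x hx hxε
    have := main x hx hxε
    have hsq : (0:ℝ) ≤ ‖x - a‖^2 := by positivity
    show f (ψ x) ≤ f a
    linarith [Set.mem_setOf_eq ▸ hx]
  · refine ⟨hcone, ψ, hψo, ε, hεpos, ?_⟩
    intro x hx hxε
    rcases eq_or_ne x a with rfl | hne
    · rw [hψa]; exact Set.mem_insert _ _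
    · right
      have hmain := main x hx hxε
      have hxapos : (0:ℝ) < ‖x - a‖^2 :=
        pow_pos (norm_pos_iff.mpr (sub_ne_zero.mpr hne)) 2
      show f (ψ x) < f a
      have hxK : ⟪g, x - a⟫ ≤ 0 := hx
      linarith
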